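/- arXiv:0811.4428 — 7 statements merged into one kernel-verified Lean document; each statement's English description precedes it below -/
import Mathlib

section
/- Let H be a complex Hilbert space, let Q : H →L H be a continuous linear map with Q ∘ Q = id, and let θ ∈ ℝ. On the Hilbert space H × H (the state space of a control qubit together with the system, where (φ₀, φ₁) represents |0⟩⊗φ₀ + |1⟩⊗φ₁), define the controlled query C_Q : (φ₀, φ₁) ↦ (φ₀, Qφ₁), and define R⊗I : (φ₀, φ₁) ↦ ( ((1+e^{−iθ})/2)φ₀ + ((1−e^{−iθ})/2)φ₁ , ((1−e^{−iθ})/2)φ₀ + ((1+e^{−iθ})/2)φ₁ ), which is the action of R = exp(−iθ(I−σ_x)/2) on the control qubit. Then for every ψ ∈ H, C_Q ∘ (R⊗I) ∘ C_Q applied to (ψ, ψ) equals (Uψ, Uψ), where U = exp(−iθ(I−Q)/2) = ((1+e^{−iθ})/2)·I + ((1−e^{−iθ})/2)·Q. (This is the exact simulation of the fractional query Q^θ = exp(−iθ(I−Q)/2) by two controlled full queries, with control qubit starting and ending in |+⟩, Fig. 3 of the paper.) -/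
open Complex

set_option maxHeartbeats 1000000 in
lemma exp_smul_idem {A : Type*} [NormedRing A] [NormedAlgebra ℂ A] [CompleteSpace A]
    (P : A) (hP : P * P = P) (c : ℂ) :
    NormedSpace.exp (c • P) = 1 + (Complex.exp c - 1) • P := by
  have hPn : ∀ n : ℕ, P ^ (n + 1) = P := by
    intro n
    induction n with
    | zero => simp
    | succ k ih => rw [pow_succ, ih, hP]
  have hsum : Summable fun n : ℕ => (n.factorial : ℂ)⁻¹ • (c • P) ^ n :=
    NormedSpace.expSeries_summable' (c • P)
  have hsumc : Summable fun n : ℕ => (n.factorial : ℂ)⁻¹ • c ^ n :=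
    NormedSpace.expSeries_summable' c
  have hsumc' : Summable fun n : ℕ => ((n + 1).factorial : ℂ)⁻¹ • c ^ (n + 1) :=
    (summable_nat_add_iff 1).2 hsumc
  have hexpc : Complex.exp c = ∑' n : ℕ, (n.factorial : ℂ)⁻¹ • c ^ n := by
    rw [Complex.exp_eq_exp_ℂ, NormedSpace.exp_eq_tsum ℂ]
  have hshift : (∑' n : ℕ, ((n + 1).factorial : ℂ)⁻¹ • c ^ (n + 1)) = Complex.exp c - 1 := by
    rw [hexpc, Summable.tsum_eq_zero_add hsumc]
    simp
  rw [NormedSpace.exp_eq_tsum ℂ]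
  dsimp only
  rw [Summable.tsum_eq_zero_add hsum]
  have h1 : ∀ n : ℕ, ((n + 1).factorial : ℂ)⁻¹ • (c • P) ^ (n + 1)
      = (((n + 1).factorial : ℂ)⁻¹ • c ^ (n + 1)) • P := by
    intro n
    rw [smul_pow, hPn, smul_smul, smul_eq_mul]
  simp only [h1]
  rw [Summable.tsum_smul_const hsumc', hshift]
  simp

/-- Exact simulation of the fractional query `Q^θ = exp(-iθ(I-Q)/2)` by two controlled
full queries, with the control qubit starting and ending in `|+⟩` (Fig. 3). -/
theorem fractional_query_exact_simulation
    {H : Type*} [NormedAddCommGroup H] [InnerProductSpace ℂ H] [CompleteSpace H]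
    (Q : H →L[ℂ] H) (hQ : Q ∘L Q = 1) (θ : ℝ)
    (CQ : H × H → H × H)
    (hCQ : ∀ φ₀ φ₁ : H, CQ (φ₀, φ₁) = (φ₀, Q φ₁))
    (R : H × H → H × H)
    (hR : ∀ φ₀ φ₁ : H, R (φ₀, φ₁) =
      (((1 + Complex.exp (-(θ : ℂ) * Complex.I)) / 2) • φ₀ +
         ((1 - Complex.exp (-(θ : ℂ) * Complex.I)) / 2) • φ₁,
       ((1 - Complex.exp (-(θ : ℂ) * Complex.I)) / 2) • φ₀ +
         ((1 + Complex.exp (-(θ : ℂ) * Complex.I)) / 2) • φ₁))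
    (U : H →L[ℂ] H)
    (hU : U = NormedSpace.exp (((-(θ : ℂ) * Complex.I) / 2) • ((1 : H →L[ℂ] H) - Q))) :
    U = ((1 + Complex.exp (-(θ : ℂ) * Complex.I)) / 2) • (1 : H →L[ℂ] H) +
          ((1 - Complex.exp (-(θ : ℂ) * Complex.I)) / 2) • Q ∧
      ∀ ψ : H, CQ (R (CQ (ψ, ψ))) = (U ψ, U ψ) := by
  set c : ℂ := -(θ : ℂ) * Complex.I with hc
  have hQQ : Q * Q = 1 := hQ
  set P : H →L[ℂ] H := (2 : ℂ)⁻¹ • ((1 : H →L[ℂ] H) - Q) with hPdef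
  have hP : P * P = P := by
    have h2 : ((1 : H →L[ℂ] H) - Q) * ((1 : H →L[ℂ] H) - Q) = (2 : ℂ) • ((1 : H →L[ℂ] H) - Q) := by
      have hx : ((1 : H →L[ℂ] H) - Q) * ((1 : H →L[ℂ] H) - Q) = 1 - Q - Q + Q * Q := by
        noncomm_ring
      rw [hx, hQQ]
      module
    rw [hPdef, smul_mul_smul_comm, h2, smul_smul]
    norm_num
  have hU1 : U = 1 + (Complex.exp c - 1) • P := by
    rw [hU, show ((-(θ : ℂ) * Complex.I) / 2) • ((1 : H →L[ℂ] H) - Q) = c • P by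
      rw [hPdef, smul_smul, hc]; ring_nf]
    exact exp_smul_idem P hP c
  have hUeq : U = ((1 + Complex.exp c) / 2) • (1 : H →L[ℂ] H) +
      ((1 - Complex.exp c) / 2) • Q := by
    rw [hU1, hPdef]
    module
  refine ⟨hUeq, fun ψ => ?_⟩
  have hQ2 : ∀ x : H, Q (Q x) = x := fun x => by
    have := ContinuousLinearMap.ext_iff.1 hQ x
    simpa using this
  rw [hCQ, hR, hCQ]
  have hUψ : U ψ = ((1 + Complex.exp c) / 2) • ψ + ((1 - Complex.exp c) / 2) • Q ψ := by
    rw [hUeq]; simp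
  rw [hUψ]
  simp [map_add, map_smul, hQ2, add_comm]
end

section
/- Let H be a complex Hilbert space, Q : H →L H a continuous linear map, and θ ∈ (0, π/2]. Set c = √(cos(θ/2)), s = √(sin(θ/2)) and v = cos(θ/2) + sin(θ/2). On H × H (control qubit plus system, where (φ₀, φ₁) represents |0⟩⊗φ₀ + |1⟩⊗φ₁), define: (R₁⊗I)(φ₀, φ₁) with the property (R₁⊗I)(ψ, 0) = (1/√v)(c·ψ, i·s·ψ); the controlled query C_Q(φ₀, φ₁) = (φ₀, Qφ₁); and (R₂⊗I)(φ₀, φ₁) = ( (1/√v)(c·φ₀ + s·φ₁), (1/√v)(s·φ₀ − c·φ₁) ). If moreover Q ∘ Q = id, then for every ψ ∈ H, (R₂⊗I) ∘ C_Q ∘ (R₁⊗I) applied to (ψ, 0) equals (1/v)·( e^{iθ/2}·exp(−iθ(I−Q)/2)ψ , √(sin θ)·e^{−iπ/4}·exp(i(π/2)(I−Q)/2)ψ ). (This is Eq. (21): the probabilistic simulation of the fractional query Q^θ by a single controlled full query; conditional on the control measuring 0 the system is in state Q^θψ, and conditional on measuring 1 it is in state Q^{−π/2}ψ, up to global phases.)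 -/
set_option maxHeartbeats 2000000

open Complex

lemma exp_eigen {H : Type*} [NormedAddCommGroup H] [NormedSpace ℂ H] [CompleteSpace H]
    (A : H →L[ℂ] H) (μ : ℂ) (x : H) (h : A x = μ • x) :
    NormedSpace.exp A x = Complex.exp μ • x := by
  have hpow : ∀ n : ℕ, (A ^ n) x = μ ^ n • x := by
    intro n
    induction n with
    | zero => simp
    | succ n ih =>
      rw [pow_succ, ContinuousLinearMap.mul_apply, h, map_smul, ih, smul_smul, pow_succ]
      ring_nf
  have hsum := NormedSpace.expSeries_summable' (𝕂 := ℂ) A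
  rw [NormedSpace.exp_eq_tsum ℂ]
  have heval := (ContinuousLinearMap.apply ℂ H x).map_tsum hsum
  simp only [ContinuousLinearMap.apply_apply] at heval
  rw [heval]
  have key : ∀ n : ℕ, (((n.factorial : ℂ)⁻¹ • A ^ n) x) = ((n.factorial : ℂ)⁻¹ • μ ^ n) • x := by
    intro n
    rw [ContinuousLinearMap.smul_apply, hpow, smul_smul, smul_eq_mul]
  simp only [key]
  rw [Summable.tsum_smul_const (NormedSpace.expSeries_summable' (𝕂 := ℂ) μ)]
  congr 1
  rw [Complex.exp_eq_exp_ℂ, NormedSpace.exp_eq_tsum ℂ]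

lemma exp_invol {H : Type*} [NormedAddCommGroup H] [NormedSpace ℂ H] [CompleteSpace H]
    (Q : H →L[ℂ] H) (hQ : Q ∘L Q = 1) (a : ℂ) (ψ : H) :
    NormedSpace.exp (a • ((1 : H →L[ℂ] H) - Q)) ψ =
      ((1 + Complex.exp (2 * a)) / 2) • ψ + ((1 - Complex.exp (2 * a)) / 2) • Q ψ := by
  have hQψ : Q (Q ψ) = ψ := by
    have := ContinuousLinearMap.ext_iff.mp hQ ψ
    simpa using this
  have e1 : NormedSpace.exp (a • ((1 : H →L[ℂ] H) - Q)) (ψ + Q ψ)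
      = Complex.exp 0 • (ψ + Q ψ) := by
    apply exp_eigen
    simp only [ContinuousLinearMap.smul_apply, ContinuousLinearMap.sub_apply,
      ContinuousLinearMap.one_apply, map_add, hQψ, zero_smul]
    module
  have e2 : NormedSpace.exp (a • ((1 : H →L[ℂ] H) - Q)) (ψ - Q ψ)
      = Complex.exp (2 * a) • (ψ - Q ψ) := by
    apply exp_eigen
    simp only [ContinuousLinearMap.smul_apply, ContinuousLinearMap.sub_apply,
      ContinuousLinearMap.one_apply, map_sub, hQψ]
    module
  have hdec : ψ = (1/2 : ℂ) • (ψ + Q ψ) + (1/2 : ℂ) • (ψ - Q ψ) := by module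
  calc NormedSpace.exp (a • ((1 : H →L[ℂ] H) - Q)) ψ
      = (1/2 : ℂ) • NormedSpace.exp (a • ((1 : H →L[ℂ] H) - Q)) (ψ + Q ψ)
        + (1/2 : ℂ) • NormedSpace.exp (a • ((1 : H →L[ℂ] H) - Q)) (ψ - Q ψ) := by
        conv_lhs => rw [hdec]
        rw [map_add, map_smul, map_smul]
    _ = _ := by rw [e1, e2]; simp only [Complex.exp_zero]; module

/-- Probabilistic simulation of the fractional query `Q^θ` by a single controlled full
query (Eq. (21) / Fig. 4): applying `R₂ ∘ C_Q ∘ R₁` to `|0⟩⊗ψ` yields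
`(1/v)( e^{iθ/2} Q^θ ψ  on control 0 ,  √(sin θ) e^{-iπ/4} Q^{-π/2} ψ  on control 1 )`,
where `Q^α = exp(-iα(I-Q)/2)`. -/
theorem fractional_query_probabilistic_simulation
    {H : Type*} [NormedAddCommGroup H] [InnerProductSpace ℂ H] [CompleteSpace H]
    (Q : H →L[ℂ] H) (θ : ℝ) (hθ : θ ∈ Set.Ioc 0 (Real.pi / 2))
    (c s v : ℝ)
    (hc : c = Real.sqrt (Real.cos (θ / 2)))
    (hs : s = Real.sqrt (Real.sin (θ / 2)))
    (hv : v = Real.cos (θ / 2) + Real.sin (θ / 2))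
    (R₁ CQ R₂ : H × H → H × H)
    (hR₁ : ∀ ψ : H, R₁ (ψ, 0) =
      (((1 / Real.sqrt v : ℝ) : ℂ) • ((c : ℂ) • ψ),
       ((1 / Real.sqrt v : ℝ) : ℂ) • ((Complex.I * (s : ℂ)) • ψ)))
    (hCQ : ∀ φ₀ φ₁ : H, CQ (φ₀, φ₁) = (φ₀, Q φ₁))
    (hR₂ : ∀ φ₀ φ₁ : H, R₂ (φ₀, φ₁) =
      (((1 / Real.sqrt v : ℝ) : ℂ) • ((c : ℂ) • φ₀ + (s : ℂ) • φ₁),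
       ((1 / Real.sqrt v : ℝ) : ℂ) • ((s : ℂ) • φ₀ - (c : ℂ) • φ₁)))
    (hQ : Q ∘L Q = 1) :
    ∀ ψ : H, R₂ (CQ (R₁ (ψ, 0))) =
      (((1 / v : ℝ) : ℂ) • (Complex.exp ((θ : ℂ) * Complex.I / 2) •
          (NormedSpace.exp (((-(θ : ℂ) * Complex.I) / 2) • ((1 : H →L[ℂ] H) - Q)) ψ)),
       ((1 / v : ℝ) : ℂ) • (((Real.sqrt (Real.sin θ) : ℂ) *
          Complex.exp (-(Real.pi : ℂ) * Complex.I / 4)) •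
          (NormedSpace.exp ((((Real.pi : ℂ) / 4) * Complex.I) • ((1 : H →L[ℂ] H) - Q)) ψ))) := by
  obtain ⟨hθ0, hθ1⟩ := hθ
  have hπ := Real.pi_pos
  have hhalf0 : 0 < θ / 2 := by linarith
  have hhalf1 : θ / 2 ≤ Real.pi / 4 := by linarith
  have hcosnn : 0 < Real.cos (θ / 2) := by
    apply Real.cos_pos_of_mem_Ioo; constructor <;> nlinarith
  have hsinnn : 0 < Real.sin (θ / 2) := by
    apply Real.sin_pos_of_pos_of_lt_pi hhalf0; nlinarith
  have hvpos : 0 < v := by rw [hv]; linarith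
  have hc2 : c * c = Real.cos (θ / 2) := by rw [hc]; exact Real.mul_self_sqrt hcosnn.le
  have hs2 : s * s = Real.sin (θ / 2) := by rw [hs]; exact Real.mul_self_sqrt hsinnn.le
  have hv2 : Real.sqrt v * Real.sqrt v = v := Real.mul_self_sqrt hvpos.le
  have hvne : (Real.sqrt v : ℝ) ≠ 0 := by positivity
  have hcnn : 0 ≤ c := by rw [hc]; positivity
  have hsnn : 0 ≤ s := by rw [hs]; positivity
  have hsinθ : Real.sin θ = 2 * Real.sin (θ/2) * Real.cos (θ/2) := by
    rw [show θ = 2 * (θ/2) by ring, Real.sin_two_mul]; ring_nf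
  have hcosθ : Real.cos θ = 2 * Real.cos (θ/2)^2 - 1 := by
    rw [show θ = 2 * (θ/2) by ring, Real.cos_two_mul]; ring_nf
  have hsqrtsin : Real.sqrt (Real.sin θ) = Real.sqrt 2 * (s * c) := by
    rw [hsinθ, ← hs2, ← hc2, show 2 * (s*s) * (c*c) = 2 * (s*c)^2 by ring,
      Real.sqrt_mul (by norm_num), Real.sqrt_sq (by positivity)]
  have h2 : Real.sqrt 2 * Real.sqrt 2 = 2 := Real.mul_self_sqrt (by norm_num)
  have hexp1 : Complex.exp (2 * ((-(θ:ℂ) * Complex.I) / 2)) =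
      (Real.cos θ : ℂ) - (Real.sin θ : ℂ) * Complex.I := by
    rw [show (2 * ((-(θ:ℂ) * Complex.I) / 2)) = (-θ:ℝ) * Complex.I by push_cast; ring,
      Complex.exp_mul_I, ← Complex.ofReal_cos, ← Complex.ofReal_sin]
    push_cast [Real.cos_neg, Real.sin_neg]
    ring
  have hexp2 : Complex.exp (2 * (((Real.pi : ℂ) / 4) * Complex.I)) = Complex.I := by
    rw [show (2 * (((Real.pi:ℂ)/4) * Complex.I)) = ((Real.pi/2 : ℝ):ℂ) * Complex.I by
        push_cast; ring,
      Complex.exp_mul_I, ← Complex.ofReal_cos, ← Complex.ofReal_sin,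
      Real.cos_pi_div_two, Real.sin_pi_div_two]
    simp
  have hexp3 : Complex.exp ((θ:ℂ) * Complex.I / 2) =
      (Real.cos (θ/2) : ℂ) + (Real.sin (θ/2) : ℂ) * Complex.I := by
    rw [show ((θ:ℂ) * Complex.I / 2) = ((θ/2 : ℝ):ℂ) * Complex.I by push_cast; ring,
      Complex.exp_mul_I, ← Complex.ofReal_cos, ← Complex.ofReal_sin]
  have hexp4 : Complex.exp (-(Real.pi : ℂ) * Complex.I / 4) =
      (Real.sqrt 2 / 2 : ℝ) - ((Real.sqrt 2 / 2 : ℝ) : ℂ) * Complex.I := by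
    rw [show (-(Real.pi:ℂ) * Complex.I / 4) = ((-(Real.pi/4) : ℝ):ℂ) * Complex.I by
        push_cast; ring,
      Complex.exp_mul_I, ← Complex.ofReal_cos, ← Complex.ofReal_sin,
      Real.cos_neg, Real.sin_neg, Real.cos_pi_div_four, Real.sin_pi_div_four]
    push_cast; ring
  intro ψ
  have hQψ : Q (Q ψ) = ψ := by
    have := ContinuousLinearMap.ext_iff.mp hQ ψ; simpa using this
  rw [hR₁, hCQ, hR₂, exp_invol Q hQ, exp_invol Q hQ]
  refine Prod.ext ?_ ?_ <;>
    simp only [map_smul, hexp1, hexp2, hexp3, hexp4] <;>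
    match_scalars
  all_goals
    have hW : ((Real.sqrt v : ℝ) : ℂ) ≠ 0 := by exact_mod_cast hvne
    have hV : ((v : ℝ) : ℂ) ≠ 0 := by exact_mod_cast hvpos.ne'
    field_simp
    try rw [show ((θ:ℂ)/2) = ((θ/2:ℝ):ℂ) by push_cast; ring]
    simp only [Complex.ext_iff, Complex.add_re, Complex.add_im, Complex.mul_re, Complex.mul_im,
      Complex.sub_re, Complex.sub_im, Complex.ofReal_re, Complex.ofReal_im, Complex.I_re,
      Complex.I_im, Complex.one_re, Complex.one_im,
      Complex.cos_ofReal_re, Complex.cos_ofReal_im, Complex.sin_ofReal_re, Complex.sin_ofReal_im,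
      Complex.div_re, Complex.div_im, Complex.normSq_apply, sq]
    try norm_num
  · constructor
    · rw [hc2, hv2, hcosθ, hsinθ]
      linear_combination (-2 * Real.cos (θ/2) * v) * Real.sin_sq_add_cos_sq (θ/2)
    · rw [hcosθ, hsinθ]; ring
  · constructor
    · rw [hv2, hcosθ, hsinθ]
      linear_combination (2 * Real.cos (θ/2) * v) * Real.sin_sq_add_cos_sq (θ/2)
    · rw [hs2, hv2, hcosθ, hsinθ]; ring
  · rw [hsqrtsin, hv2]
    linear_combination (-2 * s * c * v) * h2
  · rw [hsqrtsin, hv2]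
    linear_combination (-2 * s * c * v) * h2
end

section
/- Let H be a complex Hilbert space and Q : H →L H a self-adjoint continuous linear map with Q ∘ Q = id. Let θ ∈ [0, π] and let ψ ∈ H be a unit vector. Then ‖(1/(cos(θ/2)+sin(θ/2)))·(cos(θ/2)·ψ + i·sin(θ/2)·Qψ)‖² = 1/(1 + sin θ), and 1/(1 + sin θ) ≥ 1 − θ. (This is the success probability p_s = 1/v² ≥ 1 − θ of the probabilistic simulation of a fractional query of angle θ in Fig. 4 of the paper; note it is independent of ψ.) -/
open Complex

/-- Success probability of the probabilistic fractional-query simulation: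
`‖(1/v)(cos(θ/2)ψ + i sin(θ/2) Qψ)‖² = 1/(1 + sin θ) ≥ 1 - θ`. -/
theorem fractional_query_success_probability
    {H : Type*} [NormedAddCommGroup H] [InnerProductSpace ℂ H] [CompleteSpace H]
    (Q : H →L[ℂ] H) (hQsa : IsSelfAdjoint Q) (hQ : Q ∘L Q = 1)
    (θ : ℝ) (hθ : θ ∈ Set.Icc 0 Real.pi)
    (ψ : H) (hψ : ‖ψ‖ = 1) :
    ‖(((1 / (Real.cos (θ / 2) + Real.sin (θ / 2)) : ℝ) : ℂ)) •
        (((Real.cos (θ / 2) : ℝ) : ℂ) • ψ +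
          (Complex.I * ((Real.sin (θ / 2) : ℝ) : ℂ)) • Q ψ)‖ ^ 2
      = 1 / (1 + Real.sin θ) ∧
    1 / (1 + Real.sin θ) ≥ 1 - θ := by
  obtain ⟨hθ0, hθπ⟩ := hθ
  set c := Real.cos (θ / 2) with hc
  set s := Real.sin (θ / 2) with hs
  have hc0 : 0 ≤ c := Real.cos_nonneg_of_mem_Icc
    ⟨by linarith [Real.pi_pos], by linarith⟩
  have hs0 : 0 ≤ s := Real.sin_nonneg_of_nonneg_of_le_pi (by linarith)
    (by linarith [Real.pi_pos])
  have hcs : c ^ 2 + s ^ 2 = 1 := by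
    rw [hc, hs]; exact Real.cos_sq_add_sin_sq _
  have hv : 0 < c + s := by
    rcases lt_or_ge 0 c with h | h
    · linarith
    · have hc' : c = 0 := le_antisymm h hc0
      have : s ^ 2 = 1 := by rw [← hcs, hc']; ring
      nlinarith
  -- ‖Qψ‖ = 1
  have hQψ : ‖Q ψ‖ = 1 := by
    have h1 : Q (Q ψ) = ψ := by
      have := congrArg (fun f : H →L[ℂ] H => f ψ) hQ
      simpa using this
    have h2 : (inner ℂ (Q ψ) (Q ψ) : ℂ) = inner ℂ ψ ψ := by
      calc (inner ℂ (Q ψ) (Q ψ) : ℂ) = inner ℂ ψ (Q (Q ψ)) := by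
            rw [← ContinuousLinearMap.adjoint_inner_right,
              hQsa.adjoint_eq]
        _ = inner ℂ ψ ψ := by rw [h1]
    rw [inner_self_eq_norm_sq_to_K, inner_self_eq_norm_sq_to_K] at h2
    have : ‖Q ψ‖ ^ 2 = ‖ψ‖ ^ 2 := by exact_mod_cast h2
    nlinarith [norm_nonneg (Q ψ)]
  -- inner ℂ ψ (Q ψ) is real
  have hreal : (inner ℂ ψ (Q ψ) : ℂ).im = 0 := by
    have h2 : (inner ℂ (Q ψ) ψ : ℂ) = inner ℂ ψ (Q ψ) := by
      rw [← ContinuousLinearMap.adjoint_inner_left, hQsa.adjoint_eq]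
    have h3 : (starRingEnd ℂ) (inner ℂ ψ (Q ψ) : ℂ) = inner ℂ ψ (Q ψ) := by
      rw [inner_conj_symm]; exact h2
    have h4 := congrArg Complex.im h3
    rw [Complex.conj_im] at h4
    linarith
  have hcross : (inner ℂ ((c : ℂ) • ψ) ((Complex.I * (s : ℂ)) • Q ψ) : ℂ).re = 0 := by
    rw [inner_smul_left, inner_smul_right]
    simp [Complex.ext_iff, hreal, mul_comm, mul_assoc, mul_left_comm]
  -- norm of sum
  have hsum : ‖(c : ℂ) • ψ + (Complex.I * (s : ℂ)) • Q ψ‖ ^ 2 = 1 := by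
    have := @norm_add_sq ℂ H _ _ _ ((c : ℂ) • ψ) ((Complex.I * (s : ℂ)) • Q ψ)
    rw [this]
    simp only [RCLike.re_to_complex]
    rw [hcross]
    have n1 : ‖(c : ℂ) • ψ‖ = c := by
      rw [norm_smul, Complex.norm_real, Real.norm_eq_abs, _root_.abs_of_nonneg hc0, hψ, mul_one]
    have n2 : ‖(Complex.I * (s : ℂ)) • Q ψ‖ = s := by
      rw [norm_smul, hQψ, mul_one, norm_mul, Complex.norm_I, one_mul,
        Complex.norm_real, Real.norm_eq_abs, _root_.abs_of_nonneg hs0]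
    rw [n1, n2]
    linarith [hcs]
  have hsin : Real.sin θ = 2 * s * c := by
    rw [hs, hc, ← Real.sin_two_mul]; ring_nf
  constructor
  · rw [norm_smul]
    have : ‖((1 / (c + s) : ℝ) : ℂ)‖ = 1 / (c + s) := by
      rw [Complex.norm_real, Real.norm_eq_abs, abs_of_pos (by positivity)]
    rw [this, mul_pow]
    have h2 : ‖(c : ℂ) • ψ + (Complex.I * (s : ℂ)) • Q ψ‖ ^ 2 = 1 := hsum
    rw [h2, mul_one, hsin]
    rw [div_pow, one_pow]
    congr 1
    nlinarith [hcs]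
  · have hsinle : Real.sin θ ≤ θ := by
      rcases eq_or_lt_of_le hθ0 with h | h
      · simp [← h]
      · exact le_of_lt (Real.sin_lt h)
    have hsn : 0 ≤ Real.sin θ := Real.sin_nonneg_of_nonneg_of_le_pi hθ0 hθπ
    rw [ge_iff_le, le_div_iff₀ (by linarith)]
    nlinarith [mul_nonneg hθ0 hsn]
end

section
/- Let H be a complex Hilbert space and let A, B : H →L H be self-adjoint continuous linear maps with ‖B‖ ≤ 1. Then for every δ ≥ 0, ‖exp(−iδ(A+B)) − exp(−iδA)·exp(−iδB)‖ ≤ 2δ²‖A‖. (This is the specialization of the Trotter error bound, Eq. (9) of the paper, to time-independent Hamiltonians: A plays the role of the driving Hamiltonian D and B the query Hamiltonian, which satisfies ‖H_x‖ ≤ 1.) -/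
set_option maxHeartbeats 1000000
set_option synthInstance.maxHeartbeats 400000


open Complex NormedSpace

section Aux

variable {H : Type*} [NormedAddCommGroup H] [InnerProductSpace ℂ H] [CompleteSpace H]

/-- exp of a skew-adjoint operator has norm at most 1. -/
lemma aux_norm_exp_skew_le_one (S : H →L[ℂ] H) (hS : S ∈ skewAdjoint (H →L[ℂ] H)) :
    ‖NormedSpace.exp S‖ ≤ 1 := by
  let +nondep : NormedAlgebra ℚ (H →L[ℂ] H) := NormedAlgebra.restrictScalars ℚ ℂ (H →L[ℂ] H)
  have hu := NormedSpace.exp_mem_unitary_of_mem_skewAdjoint hS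
  have h1 : star (NormedSpace.exp S) * NormedSpace.exp S = 1 := (Unitary.mem_iff.mp hu).1
  have h2 : ‖star (NormedSpace.exp S) * NormedSpace.exp S‖ = ‖NormedSpace.exp S‖ * ‖NormedSpace.exp S‖ :=
    CStarRing.norm_star_mul_self
  have h3 : ‖(1 : H →L[ℂ] H)‖ ≤ 1 := by
    rw [ContinuousLinearMap.one_def]; exact ContinuousLinearMap.norm_id_le
  rw [h1] at h2
  nlinarith [norm_nonneg (NormedSpace.exp S)]

/-- derivative of `t ↦ exp (t • x)` (real parameter, complex exponential). -/
lemma aux_hasDerivAt_exp (x : H →L[ℂ] H) (t : ℝ) :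
    HasDerivAt (fun u : ℝ => NormedSpace.exp (u • x)) (NormedSpace.exp (t • x) * x) t := by
  have h := hasDerivAt_exp_smul_const (𝕂 := ℝ) x t
  simpa using h

lemma aux_hasDerivAt_exp' (x : H →L[ℂ] H) (t : ℝ) :
    HasDerivAt (fun u : ℝ => NormedSpace.exp (u • x)) (x * NormedSpace.exp (t • x)) t := by
  have h := hasDerivAt_exp_smul_const' (𝕂 := ℝ) x t
  simpa using h

end Aux

/-- Trotter error bound (Eq. (9), time-independent case): for self-adjoint bounded
operators `A`, `B` with `‖B‖ ≤ 1` and `δ ≥ 0`,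
`‖exp(-iδ(A+B)) - exp(-iδA) exp(-iδB)‖ ≤ 2δ²‖A‖`. -/
theorem trotter_error_bound
    {H : Type*} [NormedAddCommGroup H] [InnerProductSpace ℂ H] [CompleteSpace H]
    (A B : H →L[ℂ] H) (hA : IsSelfAdjoint A) (hB : IsSelfAdjoint B)
    (hBnorm : ‖B‖ ≤ 1) (δ : ℝ) (hδ : 0 ≤ δ) :
    ‖NormedSpace.exp ((-(δ : ℂ) * Complex.I) • (A + B)) -
        NormedSpace.exp ((-(δ : ℂ) * Complex.I) • A) *
          NormedSpace.exp ((-(δ : ℂ) * Complex.I) • B)‖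
      ≤ 2 * δ ^ 2 * ‖A‖ := by
  -- abbreviations
  obtain ⟨D, hD⟩ : ∃ D : H →L[ℂ] H, D = (-I) • A := ⟨_, rfl⟩
  obtain ⟨E, hE⟩ : ∃ E : H →L[ℂ] H, E = (-I) • B := ⟨_, rfl⟩
  obtain ⟨C, hC⟩ : ∃ C : H →L[ℂ] H, C = (-I) • (A + B) := ⟨_, rfl⟩
  have hCDE : C = D + E := by rw [hD, hE, hC, smul_add]
  have hmI : (-I) ∈ skewAdjoint ℂ := by
    rw [skewAdjoint.mem_iff]; simp
  have skewD : D ∈ skewAdjoint (H →L[ℂ] H) := hD ▸ hA.smul_mem_skewAdjoint hmI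
  have skewE : E ∈ skewAdjoint (H →L[ℂ] H) := hE ▸ hB.smul_mem_skewAdjoint hmI
  have skewC : C ∈ skewAdjoint (H →L[ℂ] H) := hC ▸ (hA.add hB).smul_mem_skewAdjoint hmI
  have hnorm : ∀ S : H →L[ℂ] H, S ∈ skewAdjoint (H →L[ℂ] H) → ∀ t : ℝ,
      ‖NormedSpace.exp (t • S)‖ ≤ 1 := fun S hS t =>
    aux_norm_exp_skew_le_one _ (skewAdjoint.smul_mem t hS)
  have hDnorm : ‖D‖ = ‖A‖ := by rw [hD, norm_smul]; simp
  -- commutator bound : ‖exp(s•D) B - B exp(s•D)‖ ≤ 2‖A‖ s on [0, δ]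
  have hcomm : ∀ s ∈ Set.Icc (0:ℝ) δ,
      ‖NormedSpace.exp (s • D) * B - B * NormedSpace.exp (s • D)‖ ≤ 2 * ‖A‖ * s := by
    intro s hs
    have key := (convex_Icc (0:ℝ) δ).norm_image_sub_le_of_norm_hasDerivWithin_le
      (f := fun t : ℝ => NormedSpace.exp (t • D) * B - B * NormedSpace.exp (t • D))
      (f' := fun t : ℝ => (NormedSpace.exp (t • D) * D) * B -
        B * (NormedSpace.exp (t • D) * D))
      (C := 2 * ‖A‖)
      (fun t _ => (((aux_hasDerivAt_exp D t).mul_const B).sub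
        ((aux_hasDerivAt_exp D t).const_mul B)).hasDerivWithinAt)
      (fun t ht => by
        show ‖NormedSpace.exp (t • D) * D * B - B * (NormedSpace.exp (t • D) * D)‖ ≤ 2 * ‖A‖
        have h1 : ‖NormedSpace.exp (t • D) * D * B‖ ≤ ‖NormedSpace.exp (t • D)‖ * ‖D‖ * ‖B‖ :=
          le_trans (norm_mul_le _ _) (by gcongr; exact norm_mul_le _ _)
        have h2 : ‖B * (NormedSpace.exp (t • D) * D)‖ ≤ ‖B‖ * (‖NormedSpace.exp (t • D)‖ * ‖D‖) :=
          le_trans (norm_mul_le _ _) (by gcongr; exact norm_mul_le _ _)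
        have hP := hnorm D skewD t
        have hB0 : (0:ℝ) ≤ ‖B‖ := norm_nonneg _
        have hP0 : (0:ℝ) ≤ ‖NormedSpace.exp (t • D)‖ := norm_nonneg _
        have hA0 : (0:ℝ) ≤ ‖A‖ := norm_nonneg _
        have h3 := norm_sub_le (NormedSpace.exp (t • D) * D * B)
          (B * (NormedSpace.exp (t • D) * D))
        rw [hDnorm] at h1 h2
        have e1 : ‖NormedSpace.exp (t • D)‖ * ‖A‖ * ‖B‖ ≤ 1 * ‖A‖ * 1 := by gcongr
        have e2 : ‖B‖ * (‖NormedSpace.exp (t • D)‖ * ‖A‖) ≤ 1 * (1 * ‖A‖) := by gcongr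
        linarith)
      (Set.left_mem_Icc.mpr hδ) hs
    simp only [zero_smul, NormedSpace.exp_zero, one_mul, mul_one, sub_self, sub_zero,
      Real.norm_eq_abs] at key
    rwa [_root_.abs_of_nonneg hs.1] at key
  -- the interpolation function and its derivative
  have hf' : ∀ s ∈ Set.Icc (0:ℝ) δ,
      HasDerivWithinAt (fun u : ℝ => NormedSpace.exp ((δ - u) • C) *
          (NormedSpace.exp (u • D) * NormedSpace.exp (u • E)))
        (NormedSpace.exp ((δ - s) • C) *
          ((NormedSpace.exp (s • D) * E - E * NormedSpace.exp (s • D)) *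
            NormedSpace.exp (s • E))) (Set.Icc 0 δ) s := by
    intro s _
    have hin : HasDerivAt (fun u : ℝ => δ - u) (-1 : ℝ) s := by
      simpa using (hasDerivAt_id s).const_sub δ
    have h1 : HasDerivAt (fun u : ℝ => NormedSpace.exp ((δ - u) • C))
        ((-1 : ℝ) • (NormedSpace.exp ((δ - s) • C) * C)) s :=
      (aux_hasDerivAt_exp C (δ - s)).scomp s hin
    have h23 := (aux_hasDerivAt_exp' D s).mul (aux_hasDerivAt_exp' E s)
    have H := h1.mul h23
    have heq : (-1 : ℝ) • (NormedSpace.exp ((δ - s) • C) * C) *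
          (NormedSpace.exp (s • D) * NormedSpace.exp (s • E)) +
        NormedSpace.exp ((δ - s) • C) *
          (D * NormedSpace.exp (s • D) * NormedSpace.exp (s • E) +
            NormedSpace.exp (s • D) * (E * NormedSpace.exp (s • E))) =
        NormedSpace.exp ((δ - s) • C) *
          ((NormedSpace.exp (s • D) * E - E * NormedSpace.exp (s • D)) *
            NormedSpace.exp (s • E)) := by
      rw [hCDE, neg_one_smul]
      noncomm_ring
    simp only [Pi.mul_apply] at H
    rw [heq] at H
    exact H.hasDerivWithinAt
  -- bound on the derivative
  have hbound : ∀ s ∈ Set.Icc (0:ℝ) δ,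
      ‖NormedSpace.exp ((δ - s) • C) *
          ((NormedSpace.exp (s • D) * E - E * NormedSpace.exp (s • D)) *
            NormedSpace.exp (s • E))‖ ≤ 2 * ‖A‖ * δ := by
    intro s hs
    have hR := hnorm C skewC (δ - s)
    have hQ := hnorm E skewE s
    have hmid : ‖NormedSpace.exp (s • D) * E - E * NormedSpace.exp (s • D)‖ ≤ 2 * ‖A‖ * s := by
      have hrw : NormedSpace.exp (s • D) * E - E * NormedSpace.exp (s • D) =
          (-I) • (NormedSpace.exp (s • D) * B - B * NormedSpace.exp (s • D)) := by
        rw [hE, smul_sub, mul_smul_comm, smul_mul_assoc]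
      rw [hrw, norm_smul]
      simpa using hcomm s hs
    have h1 : ‖NormedSpace.exp ((δ - s) • C) *
        ((NormedSpace.exp (s • D) * E - E * NormedSpace.exp (s • D)) *
          NormedSpace.exp (s • E))‖ ≤
        ‖NormedSpace.exp ((δ - s) • C)‖ *
          (‖NormedSpace.exp (s • D) * E - E * NormedSpace.exp (s • D)‖ *
            ‖NormedSpace.exp (s • E)‖) :=
      le_trans (norm_mul_le _ _) (by gcongr; exact norm_mul_le _ _)
    have hA0 : (0:ℝ) ≤ ‖A‖ := norm_nonneg _
    have e2 : ‖NormedSpace.exp ((δ - s) • C)‖ *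
        (‖NormedSpace.exp (s • D) * E - E * NormedSpace.exp (s • D)‖ *
          ‖NormedSpace.exp (s • E)‖) ≤
        1 * (‖NormedSpace.exp (s • D) * E - E * NormedSpace.exp (s • D)‖ * 1) := by gcongr
    have e3 : ‖A‖ * s ≤ ‖A‖ * δ := mul_le_mul_of_nonneg_left hs.2 hA0
    linarith
  -- mean value theorem
  have key := (convex_Icc (0:ℝ) δ).norm_image_sub_le_of_norm_hasDerivWithin_le hf' hbound
    (Set.right_mem_Icc.mpr hδ) (Set.left_mem_Icc.mpr hδ)
  -- evaluate at the endpoints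
  have hf0 : NormedSpace.exp ((δ - 0) • C) *
      (NormedSpace.exp ((0:ℝ) • D) * NormedSpace.exp ((0:ℝ) • E)) = NormedSpace.exp (δ • C) := by
    simp [NormedSpace.exp_zero]
  have hfδ : NormedSpace.exp ((δ - δ) • C) *
      (NormedSpace.exp (δ • D) * NormedSpace.exp (δ • E)) =
      NormedSpace.exp (δ • D) * NormedSpace.exp (δ • E) := by
    simp [NormedSpace.exp_zero]
  rw [hf0, hfδ] at key
  -- rewrite the goal in terms of real smul
  have harg : ∀ X : H →L[ℂ] H, (-(δ : ℂ) * Complex.I) • X = δ • ((-I) • X) := by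
    intro X
    rw [← smul_assoc]
    congr 1
    rw [Complex.real_smul]
    ring
  rw [harg (A + B), harg A, harg B, ← hC, ← hD, ← hE]
  have hδnorm : ‖(0:ℝ) - δ‖ = δ := by
    rw [Real.norm_eq_abs, abs_of_nonpos (by linarith)]; ring
  rw [hδnorm] at key
  calc ‖NormedSpace.exp (δ • C) - NormedSpace.exp (δ • D) * NormedSpace.exp (δ • E)‖
      ≤ 2 * ‖A‖ * δ * δ := key
    _ = 2 * δ ^ 2 * ‖A‖ := by ring
end

section
/- Let H be a complex Hilbert space, let A, B : H →L H be self-adjoint continuous linear maps with ‖B‖ ≤ 1, let T ≥ 0, and let p ≥ 1 be a natural number. Then ‖exp(−iT(A+B)) − (exp(−i(T/p)A)·exp(−i(T/p)B))^p‖ ≤ 2T²‖A‖/p. In particular, for every ε₁ > 0, if p ≥ 2T²‖A‖/√ε₁ then this error is at most √ε₁. (This is the discretization of a continuous-time query algorithm into p fractional-query steps, Eqs. (10)–(12) of the paper, in the time-independent case.) -/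
open Complex

set_option synthInstance.maxHeartbeats 400000
set_option maxHeartbeats 1000000

noncomputable instance instNormedAlgebraRatCLM {H : Type*} [NormedAddCommGroup H]
    [InnerProductSpace ℂ H] : NormedAlgebra ℚ (H →L[ℂ] H) :=
  NormedAlgebra.restrictScalars ℚ ℂ (H →L[ℂ] H)

open NormedSpace in
private lemma exp_unitary_mem {H : Type*} [NormedAddCommGroup H] [InnerProductSpace ℂ H]
    [CompleteSpace H] (S : H →L[ℂ] H) (hS : IsSelfAdjoint S) (t : ℝ) :
    exp (t • ((-I) • S)) ∈ unitary (H →L[ℂ] H) := by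
  apply exp_mem_unitary_of_mem_skewAdjoint
  rw [skewAdjoint.mem_iff, star_smul, star_smul, star_neg, Complex.star_def, conj_I, hS.star_eq]
  simp [smul_smul]

open NormedSpace in
private lemma norm_exp_le_one {H : Type*} [NormedAddCommGroup H] [InnerProductSpace ℂ H]
    [CompleteSpace H] [Nontrivial H] (S : H →L[ℂ] H) (hS : IsSelfAdjoint S) (t : ℝ) :
    ‖exp (t • ((-I) • S))‖ ≤ 1 :=
  (CStarRing.norm_of_mem_unitary (exp_unitary_mem S hS t)).le

open NormedSpace in
private lemma norm_exp_le_one' {H : Type*} [NormedAddCommGroup H] [InnerProductSpace ℂ H]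
    [CompleteSpace H] [Nontrivial H] (S : H →L[ℂ] H) (hS : IsSelfAdjoint S) (t : ℝ) :
    ‖exp (t • (I • S))‖ ≤ 1 := by
  have h : t • (I • S) = (-t) • ((-I) • S) := by
    rw [neg_smul, neg_smul, smul_neg, neg_neg]
  rw [h]; exact norm_exp_le_one S hS (-t)

open NormedSpace in
private lemma norm_exp_sub_one_le {H : Type*} [NormedAddCommGroup H] [InnerProductSpace ℂ H]
    [CompleteSpace H] [Nontrivial H] (S : H →L[ℂ] H) (hS : IsSelfAdjoint S)
    (hSn : ‖S‖ ≤ 1) (u : ℝ) (hu : 0 ≤ u) : ‖exp (u • (I • S)) - 1‖ ≤ u := by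
  have key : ∀ x ∈ Set.Icc (0:ℝ) u, HasDerivWithinAt (fun v : ℝ => exp (v • (I • S)))
      (exp (x • (I • S)) * (I • S)) (Set.Icc 0 u) x :=
    fun x _ => (hasDerivAt_exp_smul_const (I • S) x).hasDerivWithinAt
  have bound : ∀ x ∈ Set.Icc (0:ℝ) u, ‖exp (x • (I • S)) * (I • S)‖ ≤ 1 := by
    intro x _
    calc ‖exp (x • (I • S)) * (I • S)‖ ≤ ‖exp (x • (I • S))‖ * ‖I • S‖ := norm_mul_le _ _
    _ ≤ 1 * 1 := by
        apply mul_le_mul (norm_exp_le_one' S hS x) ?_ (norm_nonneg _) zero_le_one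
        rw [norm_smul, Complex.norm_I, one_mul]; exact hSn
    _ = 1 := one_mul 1
  have := (convex_Icc (0:ℝ) u).norm_image_sub_le_of_norm_hasDerivWithin_le key bound
    (Set.left_mem_Icc.2 hu) (Set.right_mem_Icc.2 hu)
  simpa [NormedSpace.exp_zero, _root_.abs_of_nonneg hu] using this

open NormedSpace in
private lemma trotter_step {H : Type*} [NormedAddCommGroup H] [InnerProductSpace ℂ H]
    [CompleteSpace H] [Nontrivial H] (A B : H →L[ℂ] H) (hA : IsSelfAdjoint A)
    (hB : IsSelfAdjoint B) (hBnorm : ‖B‖ ≤ 1) (s : ℝ) (hs : 0 ≤ s) :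
    ‖exp (s • ((-I) • (A + B))) - exp (s • ((-I) • A)) * exp (s • ((-I) • B))‖
      ≤ 2 * ‖A‖ * s ^ 2 := by
  set X : H →L[ℂ] H := (-I) • (A + B) with hXdef
  set Y : H →L[ℂ] H := I • B with hYdef
  set Z : H →L[ℂ] H := I • A with hZdef
  have hXYZ : X = -Z - Y := by rw [hXdef, hYdef, hZdef, smul_add, neg_smul, neg_smul]; abel
  have hcommY : ∀ u : ℝ, exp (u • Y) * Y = Y * exp (u • Y) :=
    fun u => ((Commute.refl Y).smul_left u).exp_left
  have hcommZ : ∀ u : ℝ, exp (u • Z) * Z = Z * exp (u • Z) :=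
    fun u => ((Commute.refl Z).smul_left u).exp_left
  set F : ℝ → (H →L[ℂ] H) :=
    fun u => exp (u • X) * exp (u • Y) * exp (u • Z) with hFdef
  have hF : ∀ u : ℝ, HasDerivAt F
      (exp (u • X) * (exp (u • Y) * Z - Z * exp (u • Y)) * exp (u • Z)) u := by
    intro u
    have h1 := hasDerivAt_exp_smul_const (𝕂 := ℝ) X u
    have h2 := hasDerivAt_exp_smul_const (𝕂 := ℝ) Y u
    have h3 := hasDerivAt_exp_smul_const (𝕂 := ℝ) Z u
    have hD := (h1.mul h2).mul h3
    refine hD.congr_deriv ?_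
    rw [hcommY u, hcommZ u, hXYZ]
    noncomm_ring
  have bound : ∀ u ∈ Set.Icc (0:ℝ) s,
      ‖exp (u • X) * (exp (u • Y) * Z - Z * exp (u • Y)) * exp (u • Z)‖
        ≤ 2 * ‖A‖ * s := by
    intro u hu
    have hmid : ‖exp (u • Y) * Z - Z * exp (u • Y)‖ ≤ 2 * ‖A‖ * s := by
      have hg : ‖exp (u • Y) - 1‖ ≤ s :=
        le_trans (norm_exp_sub_one_le B hB hBnorm u hu.1) hu.2
      have hrw : exp (u • Y) * Z - Z * exp (u • Y)
          = (exp (u • Y) - 1) * Z - Z * (exp (u • Y) - 1) := by noncomm_ring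
      have hZn : ‖Z‖ = ‖A‖ := by rw [hZdef, norm_smul, Complex.norm_I, one_mul]
      calc ‖exp (u • Y) * Z - Z * exp (u • Y)‖
          = ‖(exp (u • Y) - 1) * Z - Z * (exp (u • Y) - 1)‖ := by rw [hrw]
        _ ≤ ‖(exp (u • Y) - 1) * Z‖ + ‖Z * (exp (u • Y) - 1)‖ := norm_sub_le _ _
        _ ≤ ‖exp (u • Y) - 1‖ * ‖Z‖ + ‖Z‖ * ‖exp (u • Y) - 1‖ :=
            add_le_add (norm_mul_le _ _) (norm_mul_le _ _)
        _ ≤ s * ‖A‖ + ‖A‖ * s := by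
            rw [hZn]
            exact add_le_add (mul_le_mul_of_nonneg_right hg (norm_nonneg _))
              (mul_le_mul_of_nonneg_left hg (norm_nonneg _))
        _ = 2 * ‖A‖ * s := by ring
    have he : ‖exp (u • X)‖ ≤ 1 := norm_exp_le_one (A + B) (hA.add hB) u
    have hh : ‖exp (u • Z)‖ ≤ 1 := norm_exp_le_one' A hA u
    have hmidnn : (0:ℝ) ≤ 2 * ‖A‖ * s := by positivity
    calc ‖exp (u • X) * (exp (u • Y) * Z - Z * exp (u • Y)) * exp (u • Z)‖
        ≤ ‖exp (u • X) * (exp (u • Y) * Z - Z * exp (u • Y))‖ * ‖exp (u • Z)‖ :=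
          norm_mul_le _ _
      _ ≤ ‖exp (u • X)‖ * ‖exp (u • Y) * Z - Z * exp (u • Y)‖ * ‖exp (u • Z)‖ := by
          apply mul_le_mul_of_nonneg_right (norm_mul_le _ _) (norm_nonneg _)
      _ ≤ 1 * (2 * ‖A‖ * s) * 1 := by
          apply mul_le_mul _ hh (norm_nonneg _) (by positivity)
          exact mul_le_mul he hmid (norm_nonneg _) zero_le_one
      _ = 2 * ‖A‖ * s := by ring
  have hMVT := (convex_Icc (0:ℝ) s).norm_image_sub_le_of_norm_hasDerivWithin_le
    (fun x _ => (hF x).hasDerivWithinAt) bound (Set.left_mem_Icc.2 hs) (Set.right_mem_Icc.2 hs)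
  have hF0 : F 0 = 1 := by simp [hFdef, NormedSpace.exp_zero]
  have hFs : ‖F s - 1‖ ≤ 2 * ‖A‖ * s ^ 2 := by
    rw [← hF0]
    calc ‖F s - F 0‖ ≤ 2 * ‖A‖ * s * ‖s - 0‖ := hMVT
      _ = 2 * ‖A‖ * s ^ 2 := by rw [sub_zero, Real.norm_of_nonneg hs]; ring
  -- rewrite the difference
  have hZinv : exp (s • Z) * exp (s • ((-I) • A)) = 1 := by
    have : s • ((-I) • A) = -(s • Z) := by rw [hZdef, neg_smul, smul_neg]
    rw [this, ← exp_add_of_commute ((Commute.refl (s • Z)).neg_right), add_neg_cancel, NormedSpace.exp_zero]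
  have hYinv : exp (s • Y) * exp (s • ((-I) • B)) = 1 := by
    have : s • ((-I) • B) = -(s • Y) := by rw [hYdef, neg_smul, smul_neg]
    rw [this, ← exp_add_of_commute ((Commute.refl (s • Y)).neg_right), add_neg_cancel, NormedSpace.exp_zero]
  have hdiff : exp (s • X) - exp (s • ((-I) • A)) * exp (s • ((-I) • B))
      = (F s - 1) * (exp (s • ((-I) • A)) * exp (s • ((-I) • B))) := by
    rw [sub_mul, one_mul, hFdef]
    congr 1
    simp only [mul_assoc]
    rw [← mul_assoc (exp (s • Z)), hZinv, one_mul, hYinv, mul_one]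
  have hprod : ‖exp (s • ((-I) • A)) * exp (s • ((-I) • B))‖ ≤ 1 := by
    calc ‖exp (s • ((-I) • A)) * exp (s • ((-I) • B))‖
        ≤ ‖exp (s • ((-I) • A))‖ * ‖exp (s • ((-I) • B))‖ := norm_mul_le _ _
      _ ≤ 1 * 1 := mul_le_mul (norm_exp_le_one A hA s) (norm_exp_le_one B hB s)
          (norm_nonneg _) zero_le_one
      _ = 1 := one_mul 1
  calc ‖exp (s • X) - exp (s • ((-I) • A)) * exp (s • ((-I) • B))‖
      = ‖(F s - 1) * (exp (s • ((-I) • A)) * exp (s • ((-I) • B)))‖ := by rw [hdiff]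
    _ ≤ ‖F s - 1‖ * ‖exp (s • ((-I) • A)) * exp (s • ((-I) • B))‖ := norm_mul_le _ _
    _ ≤ (2 * ‖A‖ * s ^ 2) * 1 := mul_le_mul hFs hprod (norm_nonneg _) (by positivity)
    _ = 2 * ‖A‖ * s ^ 2 := mul_one _

private lemma pow_sub_pow_norm_le {H : Type*} [NormedAddCommGroup H] [InnerProductSpace ℂ H]
    [CompleteSpace H] [Nontrivial H] (U V : H →L[ℂ] H) (hU : ‖U‖ ≤ 1) (hV : ‖V‖ ≤ 1)
    {d : ℝ} (hd : ‖U - V‖ ≤ d) : ∀ n : ℕ, ‖U ^ n - V ^ n‖ ≤ n * d := by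
  have hd0 : 0 ≤ d := le_trans (norm_nonneg _) hd
  intro n
  induction n with
  | zero => simp
  | succ n ih =>
    have hsplit : U ^ (n + 1) - V ^ (n + 1) = U ^ n * (U - V) + (U ^ n - V ^ n) * V := by
      noncomm_ring
    have hUn : ‖U ^ n‖ ≤ 1 :=
      le_trans (norm_pow_le U n) (pow_le_one₀ (norm_nonneg _) hU)
    calc ‖U ^ (n + 1) - V ^ (n + 1)‖
        = ‖U ^ n * (U - V) + (U ^ n - V ^ n) * V‖ := by rw [hsplit]
      _ ≤ ‖U ^ n * (U - V)‖ + ‖(U ^ n - V ^ n) * V‖ := norm_add_le _ _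
      _ ≤ ‖U ^ n‖ * ‖U - V‖ + ‖U ^ n - V ^ n‖ * ‖V‖ :=
          add_le_add (norm_mul_le _ _) (norm_mul_le _ _)
      _ ≤ 1 * d + (n * d) * 1 := by
          exact add_le_add (mul_le_mul hUn hd (norm_nonneg _) zero_le_one)
            (mul_le_mul ih hV (norm_nonneg _) (by positivity))
      _ = (n + 1 : ℕ) * d := by push_cast; ring

open NormedSpace in
private lemma exp_complex_eq_real {H : Type*} [NormedAddCommGroup H] [InnerProductSpace ℂ H]
    [CompleteSpace H] (t : ℝ) (M : H →L[ℂ] H) :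
    exp ((-(t : ℂ) * I) • M) = exp (t • ((-I) • M)) := by
  congr 1
  rw [← Complex.coe_smul, smul_smul, neg_mul, mul_neg]



/-- Discretization of a continuous-time query algorithm into `p` fractional-query steps
(Eqs. (10)–(12), time-independent case):
`‖exp(-iT(A+B)) - (exp(-i(T/p)A) exp(-i(T/p)B))^p‖ ≤ 2T²‖A‖/p`, and in particular the
error is at most `√ε₁` whenever `p ≥ 2T²‖A‖/√ε₁`. -/
theorem trotter_discretization
    {H : Type*} [NormedAddCommGroup H] [InnerProductSpace ℂ H] [CompleteSpace H]
    (A B : H →L[ℂ] H) (hA : IsSelfAdjoint A) (hB : IsSelfAdjoint B)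
    (hBnorm : ‖B‖ ≤ 1) (T : ℝ) (hT : 0 ≤ T) (p : ℕ) (hp : 1 ≤ p) :
    ‖NormedSpace.exp ((-(T : ℂ) * Complex.I) • (A + B)) -
        (NormedSpace.exp ((-((T / p : ℝ) : ℂ) * Complex.I) • A) *
          NormedSpace.exp ((-((T / p : ℝ) : ℂ) * Complex.I) • B)) ^ p‖
      ≤ 2 * T ^ 2 * ‖A‖ / p ∧
    ∀ ε₁ : ℝ, 0 < ε₁ → (p : ℝ) ≥ 2 * T ^ 2 * ‖A‖ / Real.sqrt ε₁ →
      ‖NormedSpace.exp ((-(T : ℂ) * Complex.I) • (A + B)) -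
          (NormedSpace.exp ((-((T / p : ℝ) : ℂ) * Complex.I) • A) *
            NormedSpace.exp ((-((T / p : ℝ) : ℂ) * Complex.I) • B)) ^ p‖
        ≤ Real.sqrt ε₁ := by
  have hp0 : (p : ℝ) ≠ 0 := Nat.cast_ne_zero.2 (Nat.one_le_iff_ne_zero.1 hp)
  have hppos : (0 : ℝ) < p := Nat.cast_pos.2 hp
  have main : ‖NormedSpace.exp ((-(T : ℂ) * Complex.I) • (A + B)) -
      (NormedSpace.exp ((-((T / p : ℝ) : ℂ) * Complex.I) • A) *
        NormedSpace.exp ((-((T / p : ℝ) : ℂ) * Complex.I) • B)) ^ p‖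
      ≤ 2 * T ^ 2 * ‖A‖ / p := by
    rcases subsingleton_or_nontrivial H with hsub | hnt
    · have : Subsingleton (H →L[ℂ] H) := inferInstance
      rw [Subsingleton.elim (NormedSpace.exp ((-(T : ℂ) * Complex.I) • (A + B)) -
        (NormedSpace.exp ((-((T / p : ℝ) : ℂ) * Complex.I) • A) *
          NormedSpace.exp ((-((T / p : ℝ) : ℂ) * Complex.I) • B)) ^ p) 0, norm_zero]
      positivity
    · set s : ℝ := T / p with hsdef
      have hs0 : 0 ≤ s := div_nonneg hT hppos.le
      rw [exp_complex_eq_real T (A + B), exp_complex_eq_real s A, exp_complex_eq_real s B]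
      have hTs : T • ((-I) • (A + B)) = p • (s • ((-I) • (A + B))) := by
        rw [← Nat.cast_smul_eq_nsmul ℝ, smul_smul]
        congr 1
        rw [hsdef]
        field_simp
      rw [hTs, NormedSpace.exp_nsmul]
      have hU : ‖NormedSpace.exp (s • ((-I) • (A + B)))‖ ≤ 1 :=
        norm_exp_le_one (A + B) (hA.add hB) s
      have hV : ‖NormedSpace.exp (s • ((-I) • A)) * NormedSpace.exp (s • ((-I) • B))‖ ≤ 1 := by
        calc ‖NormedSpace.exp (s • ((-I) • A)) * NormedSpace.exp (s • ((-I) • B))‖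
            ≤ ‖NormedSpace.exp (s • ((-I) • A))‖ * ‖NormedSpace.exp (s • ((-I) • B))‖ :=
              norm_mul_le _ _
          _ ≤ 1 * 1 := mul_le_mul (norm_exp_le_one A hA s) (norm_exp_le_one B hB s)
              (norm_nonneg _) zero_le_one
          _ = 1 := one_mul 1
      have hstep := trotter_step A B hA hB hBnorm s hs0
      have := pow_sub_pow_norm_le _ _ hU hV hstep p
      refine le_trans this (le_of_eq ?_)
      rw [hsdef]
      field_simp
  refine ⟨main, fun ε₁ hε₁ hpε => le_trans main ?_⟩
  have hsq : 0 < Real.sqrt ε₁ := Real.sqrt_pos.2 hε₁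
  rw [div_le_iff₀ hppos]
  calc 2 * T ^ 2 * ‖A‖ ≤ (2 * T ^ 2 * ‖A‖ / Real.sqrt ε₁) * Real.sqrt ε₁ := by
        rw [div_mul_cancel₀ _ hsq.ne']
    _ ≤ Real.sqrt ε₁ * p := by
        rw [mul_comm (Real.sqrt ε₁)]
        exact mul_le_mul_of_nonneg_right hpε hsq.le
end

section
/- Let m, k be natural numbers and let B ∈ ℝ with 0 ≤ B ≤ 1. Then Σ_{j=k+1}^{m} C(m, j)·B^{j}·(1−B)^{m−j} ≤ ((mB)^{k+1}/(k+1)!)·e^{mB}. (This is the quantitative Poisson-type tail bound underlying Eqs. (28)–(29) of the paper: with mB ≈ 1/8 the truncation error of the control-qubit state decays like (1/8)^{k+1}/(k+1)!.) -/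
/-- Poisson-type tail bound for the binomial distribution (underlying Eqs. (28)–(29)):
`Σ_{j=k+1}^m C(m,j) B^j (1-B)^{m-j} ≤ ((mB)^{k+1}/(k+1)!) e^{mB}`. -/
theorem binomial_tail_poisson_bound
    (m k : ℕ) (B : ℝ) (hB0 : 0 ≤ B) (hB1 : B ≤ 1) :
    ∑ j ∈ Finset.Ioc k m, (m.choose j : ℝ) * B ^ j * (1 - B) ^ (m - j)
      ≤ ((m * B) ^ (k + 1) / (Nat.factorial (k + 1) : ℝ)) * Real.exp (m * B) := by
  set x : ℝ := (m : ℝ) * B with hxdef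
  have hx0 : 0 ≤ x := mul_nonneg (Nat.cast_nonneg m) hB0
  have step1 : ∑ j ∈ Finset.Ioc k m, (m.choose j : ℝ) * B ^ j * (1 - B) ^ (m - j)
      ≤ ∑ j ∈ Finset.Ioc k m, x ^ j / (Nat.factorial j : ℝ) := by
    apply Finset.sum_le_sum
    intro j hj
    have h1B : (1 - B) ^ (m - j) ≤ 1 :=
      pow_le_one₀ (by linarith) (by linarith)
    have hc : (m.choose j : ℝ) ≤ (m : ℝ) ^ j / (Nat.factorial j : ℝ) :=
      Nat.choose_le_pow_div j m
    have hcn : (0:ℝ) ≤ (m.choose j : ℝ) * B ^ j :=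
      mul_nonneg (Nat.cast_nonneg _) (pow_nonneg hB0 _)
    calc (m.choose j : ℝ) * B ^ j * (1 - B) ^ (m - j)
        ≤ (m.choose j : ℝ) * B ^ j * 1 := by
          apply mul_le_mul_of_nonneg_left h1B hcn
      _ = (m.choose j : ℝ) * B ^ j := by ring
      _ ≤ ((m : ℝ) ^ j / (Nat.factorial j : ℝ)) * B ^ j :=
          mul_le_mul_of_nonneg_right hc (pow_nonneg hB0 _)
      _ = x ^ j / (Nat.factorial j : ℝ) := by
          rw [hxdef, mul_pow]; ring
  have step2 : ∑ j ∈ Finset.Ioc k m, x ^ j / (Nat.factorial j : ℝ)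
      ≤ (x ^ (k + 1) / (Nat.factorial (k + 1) : ℝ)) * Real.exp x := by
    have hIoc : Finset.Ioc k m = Finset.Ico (k + 1) (m + 1) := by
      ext j; simp [Nat.lt_succ_iff]
    rw [hIoc, Finset.sum_Ico_eq_sum_range]
    have hterm : ∀ i, x ^ (k + 1 + i) / (Nat.factorial (k + 1 + i) : ℝ)
        ≤ (x ^ (k + 1) / (Nat.factorial (k + 1) : ℝ)) * (x ^ i / (Nat.factorial i : ℝ)) := by
      intro i
      rw [pow_add, div_mul_div_comm]
      apply div_le_div_of_nonneg_left (by positivity) (by positivity)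
      exact_mod_cast Nat.le_of_dvd (Nat.factorial_pos _) (Nat.factorial_mul_factorial_dvd_factorial_add (k + 1) i)
    calc ∑ i ∈ Finset.range (m + 1 - (k + 1)), x ^ (k + 1 + i) / (Nat.factorial (k + 1 + i) : ℝ)
        ≤ ∑ i ∈ Finset.range (m + 1 - (k + 1)),
            (x ^ (k + 1) / (Nat.factorial (k + 1) : ℝ)) * (x ^ i / (Nat.factorial i : ℝ)) :=
          Finset.sum_le_sum fun i _ => hterm i
      _ = (x ^ (k + 1) / (Nat.factorial (k + 1) : ℝ)) *
            ∑ i ∈ Finset.range (m + 1 - (k + 1)), x ^ i / (Nat.factorial i : ℝ) := by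
          rw [Finset.mul_sum]
      _ ≤ (x ^ (k + 1) / (Nat.factorial (k + 1) : ℝ)) * Real.exp x := by
          apply mul_le_mul_of_nonneg_left (Real.sum_le_exp_of_nonneg hx0 _) (by positivity)
  exact step1.trans step2
end

section
/- Let m be a natural number, let q₁, …, q_m ≥ 0 and A, C₀, C₁, …, C_m ≥ 0 be real numbers satisfying: Σ_{α=1}^{m} q_α ≤ 1/4; Σ_{α=1}^{m} α·q_α ≤ 1/4; A ≤ 2; C_α ≤ C₀ + α·A for all 1 ≤ α ≤ m; and C₀ = Σ_{α=1}^{m} q_α·(C_α + C₀). Then C₀ ≤ 1. (This is the recursion of Subsection II D of the paper bounding the expected number of error-fixing operations Q_x^{±π/2}: q_α is the probability that a segment computation results in α errors, C_α is the expected cost of undoing α errors, A is the expected number of segment computations per segment, and the conclusion is that the expected number of Q_x^{±π/2} operations per original segment is at most 1.) -/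
/-- Recursion of Subsection II D bounding the expected number of error-fixing
operations: given `Σ q_α ≤ 1/4`, `Σ α q_α ≤ 1/4`, `A ≤ 2`, `C_α ≤ C₀ + αA`, and
`C₀ = Σ_{α=1}^m q_α (C_α + C₀)`, one has `C₀ ≤ 1`. -/
theorem error_correction_cost_recursion
    (m : ℕ) (q C : ℕ → ℝ) (A : ℝ)
    (hq : ∀ α ∈ Finset.Icc 1 m, 0 ≤ q α)
    (hC : ∀ α, α ≤ m → 0 ≤ C α)
    (hA0 : 0 ≤ A) (hA : A ≤ 2)
    (hqsum : ∑ α ∈ Finset.Icc 1 m, q α ≤ 1 / 4)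
    (hqmean : ∑ α ∈ Finset.Icc 1 m, (α : ℝ) * q α ≤ 1 / 4)
    (hCα : ∀ α ∈ Finset.Icc 1 m, C α ≤ C 0 + (α : ℝ) * A)
    (hrec : C 0 = ∑ α ∈ Finset.Icc 1 m, q α * (C α + C 0)) :
    C 0 ≤ 1 := by
  have hC0 : 0 ≤ C 0 := hC 0 (Nat.zero_le m)
  have hmean0 : 0 ≤ ∑ α ∈ Finset.Icc 1 m, (α : ℝ) * q α :=
    Finset.sum_nonneg fun α hα => mul_nonneg (Nat.cast_nonneg α) (hq α hα)
  have key : C 0 ≤ 2 * C 0 * (1/4) + A * (1/4) := by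
    calc C 0 = ∑ α ∈ Finset.Icc 1 m, q α * (C α + C 0) := hrec
      _ ≤ ∑ α ∈ Finset.Icc 1 m, (2 * C 0 * q α + A * ((α : ℝ) * q α)) := by
          apply Finset.sum_le_sum
          intro α hα
          have h1 := hCα α hα
          have h2 := hq α hα
          nlinarith [mul_nonneg (Nat.cast_nonneg α : (0:ℝ) ≤ α) hA0]
      _ = 2 * C 0 * (∑ α ∈ Finset.Icc 1 m, q α)
            + A * (∑ α ∈ Finset.Icc 1 m, (α : ℝ) * q α) := by
          rw [Finset.sum_add_distrib, Finset.mul_sum, Finset.mul_sum]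
      _ ≤ 2 * C 0 * (1/4) + A * (1/4) := by
          have hqs0 : 0 ≤ ∑ α ∈ Finset.Icc 1 m, q α :=
            Finset.sum_nonneg hq
          nlinarith
  nlinarith
end
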